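/- Let n ≥ 1, 1 ≤ k ≤ n, and let Z_1,…,Z_n be exchangeable random variables. Then for every real t and every x ≥ 0, P(Z_{n-k+1:n} > t+x, Z_{1:n} > t) = P(Z_1 > t+x, …, Z_n > t+x) + Σ_{i=1}^{n−k} C(n,i) P(t < Z_1 ≤ t+x, …, t < Z_i ≤ t+x, Z_{i+1} > t+x, …, Z_n > t+x). -/

import Mathlib

open MeasureTheory ProbabilityTheory

/-- `orderStat Z j ω` is the `j`-th smallest value (1-indexed) among `Z 0 ω, …, Z (n-1) ω`. -/
noncomputable def orderStat {Ω : Type*} {n : ℕ} (Z : Fin n → Ω → ℝ) (j : ℕ) (ω : Ω) : ℝ :=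
  ((List.ofFn fun i => Z i ω).mergeSort (fun x y => x ≤ y)).getD (j - 1) 0

lemma sorted_getD_gt (s : ℝ) : ∀ (l : List ℝ), l.Pairwise (· ≤ ·) → ∀ j, j < l.length →
    (s < l.getD j 0 ↔ l.countP (fun a => a ≤ s) ≤ j) := by
  intro l
  induction l with
  | nil => intro _ j hj; simp at hj
  | cons a l ih =>
    intro hs j hj
    rw [List.pairwise_cons] at hs
    obtain ⟨ha, hs⟩ := hs
    cases j with
    | zero =>
      simp only [List.getD_cons_zero, List.countP_cons, Nat.le_zero]
      constructor
      · intro h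
        rw [Nat.add_eq_zero]
        constructor
        · rw [List.countP_eq_zero]
          intro b hb
          simpa using not_le.2 (lt_of_lt_of_le h (ha b hb))
        · simpa using not_le.2 h
      · intro h
        rw [Nat.add_eq_zero] at h
        have := h.2
        by_contra hc
        simp [not_lt.1 hc] at this
    | succ j =>
      have hjl : j < l.length := by simpa using hj
      have key := ih hs j hjl
      rw [List.getD_cons_succ, List.countP_cons, key]
      by_cases hle : a ≤ s
      · simp [hle]
      · have hz : l.countP (fun a => a ≤ s) = 0 := by
          rw [List.countP_eq_zero]
          intro b hb
          simpa using fun h => hle (le_trans (ha b hb) h)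
        simp [hle, hz]

lemma countP_ofFn {n : ℕ} (f : Fin n → ℝ) (p : ℝ → Bool) :
    (List.ofFn f).countP p = (Finset.univ.filter (fun i => p (f i))).card := by
  rw [List.countP_eq_length_filter, List.ofFn_eq_map, List.filter_map, List.length_map,
    ← List.countP_eq_length_filter, Fin.univ_def]
  simp only [Finset.filter, Finset.card_mk, Multiset.filter_coe, Multiset.coe_card,
    ← List.countP_eq_length_filter]
  congr 1
  funext i
  simp [Function.comp]

open Classical in
lemma orderStat_gt_iff {Ω : Type*} {n : ℕ} (Z : Fin n → Ω → ℝ) (ω : Ω) (j : ℕ)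
    (hj : j - 1 < n) (s : ℝ) :
    s < orderStat Z j ω ↔ (Finset.univ.filter (fun i => Z i ω ≤ s)).card ≤ j - 1 := by
  unfold orderStat
  rw [sorted_getD_gt s _ (List.pairwise_mergeSort' _ _) (j - 1)
      (by rwa [List.length_mergeSort, List.length_ofFn]),
    (List.mergeSort_perm _ _).countP_eq, countP_ofFn]
  simp

def ESet {Ω : Type*} {n : ℕ} (Z : Fin n → Ω → ℝ) (t x : ℝ) (S : Finset (Fin n)) : Set Ω :=
  {ω | ∀ i, (i ∈ S → t < Z i ω ∧ Z i ω ≤ t + x) ∧ (i ∉ S → t + x < Z i ω)}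

def ASet {n : ℕ} (t x : ℝ) (S : Finset (Fin n)) : Set (Fin n → ℝ) :=
  {v | ∀ i, (i ∈ S → t < v i ∧ v i ≤ t + x) ∧ (i ∉ S → t + x < v i)}

lemma measurable_ASet {n : ℕ} (t x : ℝ) (S : Finset (Fin n)) : MeasurableSet (ASet t x S) := by
  have : ASet t x S = ⋂ i, {v : Fin n → ℝ |
      (i ∈ S → t < v i ∧ v i ≤ t + x) ∧ (i ∉ S → t + x < v i)} := by
    ext v; simp [ASet, Set.mem_iInter]
  rw [this]
  apply MeasurableSet.iInter
  intro i
  by_cases hi : i ∈ S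
  · have : {v : Fin n → ℝ | (i ∈ S → t < v i ∧ v i ≤ t + x) ∧ (i ∉ S → t + x < v i)}
        = (fun v : Fin n → ℝ => v i) ⁻¹' (Set.Ioc t (t + x)) := by
      ext v; simp [hi, Set.mem_Ioc]
    rw [this]; exact (measurable_pi_apply i) measurableSet_Ioc
  · have : {v : Fin n → ℝ | (i ∈ S → t < v i ∧ v i ≤ t + x) ∧ (i ∉ S → t + x < v i)}
        = (fun v : Fin n → ℝ => v i) ⁻¹' (Set.Ioi (t + x)) := by
      ext v; simp [hi, Set.mem_Ioi]
    rw [this]; exact (measurable_pi_apply i) measurableSet_Ioi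

lemma ESet_eq_preimage {Ω : Type*} {n : ℕ} (Z : Fin n → Ω → ℝ) (t x : ℝ) (S : Finset (Fin n)) :
    ESet Z t x S = (fun ω => fun i => Z i ω) ⁻¹' (ASet t x S) := rfl

def ISet (n i : ℕ) : Finset (Fin n) := Finset.univ.filter (fun l => (l : ℕ) < i)

lemma card_ISet (n i : ℕ) (hi : i ≤ n) : (ISet n i).card = i := by
  unfold ISet
  rw [show (Finset.univ.filter (fun l : Fin n => (l : ℕ) < i)) =
    Finset.map (Fin.castLEEmb hi) Finset.univ from ?_]
  · simp
  · ext l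
    simp only [Finset.mem_filter, Finset.mem_univ, true_and, Finset.mem_map,
      Fin.castLEEmb, Function.Embedding.coeFn_mk]
    constructor
    · intro hl; exact ⟨⟨l, hl⟩, by ext; simp [Fin.castLE]⟩
    · rintro ⟨m, _, rfl⟩; simpa using m.isLt

-- permutation mapping ISet onto S

lemma exists_perm {n i : ℕ} (S : Finset (Fin n)) (hS : S.card = i) (hi : i ≤ n) :
    ∃ σ : Equiv.Perm (Fin n), ∀ l, σ l ∈ S ↔ l ∈ ISet n i := by
  classical
  have hcard : (ISet n i).card = S.card := by rw [card_ISet n i hi, hS]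
  have hcardc : (ISet n i)ᶜ.card = Sᶜ.card := by
    rw [Finset.card_compl, Finset.card_compl, hcard]
  let eI : {l // l ∈ ISet n i} ≃ {l // l ∈ S} := Finset.equivOfCardEq hcard
  let eC' : {l // l ∈ (ISet n i)ᶜ} ≃ {l // l ∈ Sᶜ} := Finset.equivOfCardEq hcardc
  let eC : {l // l ∉ ISet n i} ≃ {l // l ∉ S} :=
    ((Equiv.subtypeEquivRight (fun l => (Finset.mem_compl (s := ISet n i)))).symm.trans
      eC').trans (Equiv.subtypeEquivRight (fun l => (Finset.mem_compl (s := S))))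
  refine ⟨Equiv.subtypeCongr eI eC, ?_⟩
  intro l
  unfold Equiv.subtypeCongr
  by_cases hl : l ∈ ISet n i
  · simp only [Equiv.trans_apply, Equiv.sumCompl_symm_apply_of_pos hl,
      Equiv.sumCongr_apply, Sum.map_inl, Equiv.sumCompl_apply_inl]
    simp [hl, (eI ⟨l, hl⟩).2]
  · simp only [Equiv.trans_apply, Equiv.sumCompl_symm_apply_of_neg hl,
      Equiv.sumCongr_apply, Sum.map_inr, Equiv.sumCompl_apply_inr]
    simp [hl, (eC ⟨l, hl⟩).2]

lemma measurable_ESet {Ω : Type*} [MeasurableSpace Ω] {n : ℕ} (Z : Fin n → Ω → ℝ)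
    (hZm : ∀ i, Measurable (Z i)) (t x : ℝ) (S : Finset (Fin n)) :
    MeasurableSet (ESet Z t x S) := by
  rw [ESet_eq_preimage]
  exact (measurable_pi_lambda _ hZm) (measurable_ASet t x S)

lemma measure_ESet_eq {Ω : Type*} [MeasurableSpace Ω] (P : Measure Ω) {n : ℕ}
    (Z : Fin n → Ω → ℝ) (hZm : ∀ i, Measurable (Z i))
    (hexch : ∀ σ : Equiv.Perm (Fin n),
      Measure.map (fun ω => fun i => Z (σ i) ω) P = Measure.map (fun ω => fun i => Z i ω) P)
    (t x : ℝ) (S : Finset (Fin n)) :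
    P (ESet Z t x S) = P (ESet Z t x (ISet n S.card)) := by
  obtain ⟨σ, hσ⟩ := exists_perm S rfl (by simpa using Finset.card_le_card (Finset.subset_univ S))
  have h1 : ESet Z t x S = (fun ω => fun i => Z (σ i) ω) ⁻¹' (ASet t x (ISet n S.card)) := by
    ext ω
    constructor
    · intro hω l
      refine ⟨fun hl => (hω (σ l)).1 ((hσ l).2 hl), fun hl => (hω (σ l)).2 (fun hc => hl ((hσ l).1 hc))⟩
    · intro hv i
      have hmem : σ.symm i ∈ ISet n S.card ↔ i ∈ S := by
        rw [← hσ (σ.symm i), σ.apply_symm_apply]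
      have := hv (σ.symm i)
      simp only [σ.apply_symm_apply] at this
      exact ⟨fun hi => this.1 (hmem.2 hi), fun hi => this.2 (fun hc => hi (hmem.1 hc))⟩
  have hm1 : Measurable (fun ω => fun i => Z (σ i) ω) := measurable_pi_lambda _ (fun i => hZm (σ i))
  have hm2 : Measurable (fun ω => fun i => Z i ω) := measurable_pi_lambda _ hZm
  rw [h1, ← Measure.map_apply hm1 (measurable_ASet t x _), hexch σ,
    Measure.map_apply hm2 (measurable_ASet t x _), ← ESet_eq_preimage]

theorem joint_survival_order_statistics_exchangeable
    {Ω : Type*} [MeasurableSpace Ω] (P : Measure Ω) [IsProbabilityMeasure P]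
    (n k : ℕ) (hn : 1 ≤ n) (hk1 : 1 ≤ k) (hkn : k ≤ n)
    (Z : Fin n → Ω → ℝ) (hZm : ∀ i, Measurable (Z i))
    (hexch : ∀ σ : Equiv.Perm (Fin n),
      Measure.map (fun ω => fun i => Z (σ i) ω) P = Measure.map (fun ω => fun i => Z i ω) P)
    (t x : ℝ) (hx : 0 ≤ x) :
    (P {ω | t + x < orderStat Z (n - k + 1) ω ∧ t < orderStat Z 1 ω}).toReal
      = (P {ω | ∀ l : Fin n, t + x < Z l ω}).toReal
        + ∑ i ∈ Finset.Icc 1 (n - k), (n.choose i : ℝ) *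
            (P {ω | (∀ l : Fin n, (l : ℕ) < i → t < Z l ω ∧ Z l ω ≤ t + x)
              ∧ (∀ l : Fin n, i ≤ (l : ℕ) → t + x < Z l ω)}).toReal := by
  classical
  set m := n - k with hm
  set s : Finset (Finset (Fin n)) := Finset.univ.filter (fun S => S.card ≤ m) with hs
  -- Step 1: event decomposition
  have hEvent : {ω | t + x < orderStat Z (n - k + 1) ω ∧ t < orderStat Z 1 ω}
      = ⋃ S ∈ s, ESet Z t x S := by
    ext ω
    simp only [Set.mem_setOf_eq, Set.mem_iUnion, hs, Finset.mem_filter, Finset.mem_univ, true_and,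
      exists_prop]
    rw [orderStat_gt_iff Z ω (n - k + 1) (by omega) (t + x),
      orderStat_gt_iff Z ω 1 (by omega) t]
    have hidx : n - k + 1 - 1 = m := by omega
    rw [hidx]
    simp only [Nat.sub_self, Nat.le_zero, Finset.card_eq_zero, Finset.filter_eq_empty_iff,
      Finset.mem_univ, true_implies]
    constructor
    · rintro ⟨h1, h2⟩
      refine ⟨Finset.univ.filter (fun i => Z i ω ≤ t + x), h1, ?_⟩
      intro i
      constructor
      · intro hi
        rw [Finset.mem_filter] at hi
        exact ⟨lt_of_not_ge (@h2 i), hi.2⟩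
      · intro hi
        rw [Finset.mem_filter] at hi
        push_neg at hi
        exact hi (Finset.mem_univ i)
    · rintro ⟨S, hScard, hω⟩
      have hfil : Finset.univ.filter (fun i => Z i ω ≤ t + x) = S := by
        ext i
        simp only [Finset.mem_filter, Finset.mem_univ, true_and]
        constructor
        · intro hle
          by_contra hc
          exact absurd hle (not_le.2 ((hω i).2 hc))
        · intro hi; exact ((hω i).1 hi).2
      refine ⟨by rw [hfil]; exact hScard, ?_⟩
      intro i
      by_cases hi : i ∈ S
      · simpa using not_le.2 ((hω i).1 hi).1
      · simpa using not_le.2 (show t < Z i ω by linarith [(hω i).2 hi])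
  -- Step 2: measure of disjoint union
  have hdisj : Set.PairwiseDisjoint (↑s) (ESet Z t x) := by
    intro S hS S' hS' hne
    refine Set.disjoint_left.2 ?_
    intro ω hω hω'
    apply hne
    ext i
    constructor
    · intro hi
      by_contra hc
      exact absurd ((hω i).1 hi).2 (not_le.2 ((hω' i).2 hc))
    · intro hi
      by_contra hc
      exact absurd ((hω' i).1 hi).2 (not_le.2 ((hω i).2 hc))
  rw [hEvent, measure_biUnion_finset hdisj (fun S _ => measurable_ESet Z hZm t x S),
    ENNReal.toReal_sum (fun S _ => measure_ne_top P _)]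
  -- Step 3: regroup by cardinality
  have hmaps : ∀ S ∈ s, S.card ∈ Finset.range (m + 1) := by
    intro S hS
    rw [Finset.mem_range, Nat.lt_succ_iff]
    exact (Finset.mem_filter.1 hS).2
  rw [← Finset.sum_fiberwise_of_maps_to hmaps (fun S => (P (ESet Z t x S)).toReal)]
  have hinner : ∀ i ∈ Finset.range (m + 1),
      ∑ S ∈ s.filter (fun S => S.card = i), (P (ESet Z t x S)).toReal
        = (n.choose i : ℝ) * (P (ESet Z t x (ISet n i))).toReal := by
    intro i hi
    rw [Finset.mem_range, Nat.lt_succ_iff] at hi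
    have hsf : s.filter (fun S => S.card = i) = Finset.powersetCard i Finset.univ := by
      rw [hs, Finset.filter_filter, Finset.powersetCard_eq_filter, Finset.powerset_univ]
      congr 1
      funext S
      simp only [eq_iff_iff]
      constructor
      · rintro ⟨_, h⟩; exact h
      · intro h; exact ⟨by omega, h⟩
    have hterm : ∀ S ∈ s.filter (fun S => S.card = i),
        (P (ESet Z t x S)).toReal = (P (ESet Z t x (ISet n i))).toReal := by
      intro S hS
      have hcard : S.card = i := (Finset.mem_filter.1 hS).2
      rw [measure_ESet_eq P Z hZm hexch t x S, hcard]
    rw [Finset.sum_congr rfl hterm, Finset.sum_const, hsf, Finset.card_powersetCard,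
      Finset.card_univ, Fintype.card_fin, nsmul_eq_mul]
  rw [Finset.sum_congr rfl hinner]
  -- Step 4: split off i = 0
  have hrange : Finset.range (m + 1) = insert 0 (Finset.Icc 1 m) := by
    ext j; simp [Nat.lt_succ_iff]; omega
  rw [hrange, Finset.sum_insert (by simp)]
  have h0 : ESet Z t x (ISet n 0) = {ω | ∀ l : Fin n, t + x < Z l ω} := by
    ext ω; simp [ESet, ISet]
  have hI : ∀ i, ESet Z t x (ISet n i) = {ω | (∀ l : Fin n, (l : ℕ) < i → t < Z l ω ∧ Z l ω ≤ t + x)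
      ∧ (∀ l : Fin n, i ≤ (l : ℕ) → t + x < Z l ω)} := by
    intro i
    ext ω
    simp only [ESet, ISet, Set.mem_setOf_eq, Finset.mem_filter, Finset.mem_univ, true_and, not_lt,
      ← forall_and]
  rw [h0]
  simp only [Nat.choose_zero_right, Nat.cast_one, one_mul]
  congr 1
  refine Finset.sum_congr rfl ?_
  intro i _
  rw [hI i]
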